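/- Let k be a field of characteristic 0 and let n, r, s be nonnegative integers with r + s ≤ n. In the Laurent polynomial ring k[x_1^{±1}, …, x_n^{±1}], the family of r + s elements p_1^+, …, p_r^+, p_1^−, …, p_s^−, where p_m^+ := x_1^m + ⋯ + x_n^m and p_m^− := x_1^{−m} + ⋯ + x_n^{−m}, is algebraically independent over k. -/

import Mathlib

/-!
Algebraic independence of power sums in a Laurent polynomial ring.
-/

noncomputable section

/-- The Laurent polynomial ring `k[x_1^{±1}, …, x_n^{±1}]`: the group algebra over `k`
of the free abelian group `ℤ^n`. -/
abbrev LaurentRing (k : Type*) [Field k] (n : ℕ) : Type _ :=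
  AddMonoidAlgebra k (Fin n → ℤ)

/-- The standard invertible generator `x_i` of the Laurent polynomial ring, as a unit. -/
def xgen (k : Type*) [Field k] (n : ℕ) (i : Fin n) : (LaurentRing k n)ˣ where
  val := AddMonoidAlgebra.single (Pi.single i (1 : ℤ)) (1 : k)
  inv := AddMonoidAlgebra.single (Pi.single i (-1 : ℤ)) (1 : k)
  val_inv := by
    rw [AddMonoidAlgebra.single_mul_single, AddMonoidAlgebra.one_def]
    congr 1
    · ext l; by_cases h : l = i <;> simp [h]
    · exact one_mul 1
  inv_val := by
    rw [AddMonoidAlgebra.single_mul_single, AddMonoidAlgebra.one_def]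
    congr 1
    · ext l; by_cases h : l = i <;> simp [h]
    · exact one_mul 1

/-- The power sum `p_m = x_1^m + ⋯ + x_n^m` (for `m ∈ ℤ`), so that `p_m^+ = p_m` and
`p_m^− = p_{−m}` for `m ≥ 1`. -/
def powerSumL (k : Type*) [Field k] (n : ℕ) (m : ℤ) : LaurentRing k n :=
  ∑ i : Fin n, ((xgen k n i ^ m : (LaurentRing k n)ˣ) : LaurentRing k n)

namespace PowerSumsAux

open MvPolynomial

variable (k : Type*) [Field k] (n : ℕ)

instance : IsDomain (LaurentRing k n) := NoZeroDivisors.to_isDomain _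

/-- Monomials as units of the Laurent ring. -/
def uhom : Multiplicative (Fin n → ℤ) →* (LaurentRing k n)ˣ where
  toFun a :=
    { val := AddMonoidAlgebra.single a.toAdd 1
      inv := AddMonoidAlgebra.single (-a.toAdd) 1
      val_inv := by
        rw [AddMonoidAlgebra.single_mul_single, add_neg_cancel, one_mul,
          AddMonoidAlgebra.one_def]
      inv_val := by
        rw [AddMonoidAlgebra.single_mul_single, neg_add_cancel, one_mul,
          AddMonoidAlgebra.one_def] }
  map_one' := Units.ext (by simp [AddMonoidAlgebra.one_def])
  map_mul' a b := Units.ext (by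
    show AddMonoidAlgebra.single _ 1 = AddMonoidAlgebra.single _ 1 * AddMonoidAlgebra.single _ 1
    rw [AddMonoidAlgebra.single_mul_single, one_mul]; rfl)

lemma xgen_eq (i : Fin n) :
    xgen k n i = uhom k n (Multiplicative.ofAdd (Pi.single i 1)) := Units.ext rfl

lemma xgen_zpow (i : Fin n) (m : ℤ) :
    ((xgen k n i ^ m : (LaurentRing k n)ˣ) : LaurentRing k n)
      = AddMonoidAlgebra.single (Pi.single i m) 1 := by
  rw [xgen_eq, ← map_zpow]
  have h : (Multiplicative.ofAdd (Pi.single i (1:ℤ)) : Multiplicative (Fin n → ℤ)) ^ m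
      = Multiplicative.ofAdd (Pi.single i m) := by
    rw [← ofAdd_zsmul]
    congr 1
    ext j; by_cases h : j = i <;> simp [h, Pi.single_apply]
  rw [h]; rfl

lemma powerSumL_eq (m : ℤ) :
    powerSumL k n m = ∑ i : Fin n, AddMonoidAlgebra.single (Pi.single i m) (1:k) := by
  simp [powerSumL, xgen_zpow]

/-- The weight derivation `x_i ∂/∂x_i`, as a linear map. -/
def wderivL (i : Fin n) : LaurentRing k n →ₗ[k] LaurentRing k n :=
  (AddMonoidAlgebra.coeffLinearEquiv k).symm.toLinearMap ∘ₗ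
    (Finsupp.lsum k fun a => ((a i : k) • (Finsupp.lsingle a : k →ₗ[k] ((Fin n → ℤ) →₀ k)))) ∘ₗ
    (AddMonoidAlgebra.coeffLinearEquiv k).toLinearMap

lemma wderivL_single (i : Fin n) (a : Fin n → ℤ) (c : k) :
    wderivL k n i (AddMonoidAlgebra.single a c) = AddMonoidAlgebra.single a ((a i : k) * c) := by
  show AddMonoidAlgebra.ofCoeff ((Finsupp.lsum k fun a => ((a i : k) • (Finsupp.lsingle a : k →ₗ[k] ((Fin n → ℤ) →₀ k))))
      (Finsupp.single a c)) = AddMonoidAlgebra.ofCoeff (Finsupp.single a ((a i : k) * c))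
  rw [Finsupp.lsum_single, LinearMap.smul_apply, Finsupp.lsingle_apply, Finsupp.smul_single,
    smul_eq_mul]

lemma wderivL_mul (i : Fin n) (x y : LaurentRing k n) :
    wderivL k n i (x * y) = x * wderivL k n i y + y * wderivL k n i x := by
  induction x using AddMonoidAlgebra.induction_on with
  | smul r f hf =>
    rw [smul_mul_assoc, map_smul, hf, map_smul, smul_add, smul_mul_assoc, mul_smul_comm]
  | add f g hf hg =>
    rw [add_mul, map_add, hf, hg, map_add, add_mul, mul_add]; ring
  | of a =>
    induction y using AddMonoidAlgebra.induction_on with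
    | smul r f hf =>
      rw [mul_smul_comm, map_smul, hf, map_smul, smul_add, mul_smul_comm, smul_mul_assoc]
    | add f g hf hg =>
      rw [mul_add, map_add, hf, hg, map_add, mul_add, add_mul]; ring
    | of b =>
      show wderivL k n i (AddMonoidAlgebra.single a 1 * AddMonoidAlgebra.single b 1)
        = AddMonoidAlgebra.single a 1 * wderivL k n i (AddMonoidAlgebra.single b 1)
          + AddMonoidAlgebra.single b 1 * wderivL k n i (AddMonoidAlgebra.single a 1)
      rw [AddMonoidAlgebra.single_mul_single, wderivL_single, wderivL_single, wderivL_single,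
        AddMonoidAlgebra.single_mul_single, AddMonoidAlgebra.single_mul_single, one_mul, mul_one,
        mul_one, mul_one, show ((a+b) i : k) = (a i : k) + (b i : k)
          by rw [Pi.add_apply]; push_cast; ring,
        add_comm b a, ← AddMonoidAlgebra.single_add]
      ring_nf

/-- The weight derivation `x_i ∂/∂x_i` on the Laurent ring. -/
def wderiv (i : Fin n) : Derivation k (LaurentRing k n) (LaurentRing k n) where
  toLinearMap := wderivL k n i
  map_one_eq_zero' := by
    rw [AddMonoidAlgebra.one_def, wderivL_single]
    simp
  leibniz' := by
    intro x y
    show wderivL k n i (x * y) = x • wderivL k n i y + y • wderivL k n i x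
    rw [smul_eq_mul, smul_eq_mul, wderivL_mul]

lemma wderiv_single (i : Fin n) (a : Fin n → ℤ) (c : k) :
    wderiv k n i (AddMonoidAlgebra.single a c) = AddMonoidAlgebra.single a ((a i : k) * c) :=
  wderivL_single k n i a c

lemma wderiv_powerSumL (i : Fin n) (m : ℤ) :
    wderiv k n i (powerSumL k n m) = (m : k) • AddMonoidAlgebra.single (Pi.single i m) 1 := by
  rw [powerSumL_eq, map_sum,
    Finset.sum_congr rfl (fun j _ => wderiv_single k n i (Pi.single j m) 1),
    Finset.sum_eq_single i]
  · rw [Pi.single_eq_same, mul_one]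
    show (AddMonoidAlgebra.single (Pi.single i m : Fin n → ℤ) (((m:ℤ):k)) : LaurentRing k n)
      = ((m:ℤ):k) • (AddMonoidAlgebra.single (Pi.single i m : Fin n → ℤ) (1:k) : LaurentRing k n)
    rw [AddMonoidAlgebra.smul_single, smul_eq_mul, mul_one]
  · intro j _ hj
    rw [Pi.single_eq_of_ne (Ne.symm hj)]
    show (AddMonoidAlgebra.single (Pi.single j m : Fin n → ℤ) (((0:ℤ):k) * 1) : LaurentRing k n) = 0
    simp
  · intro h
    exact absurd (Finset.mem_univ i) h

/-- Chain rule for a derivation applied to a polynomial evaluation. -/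
lemma derivation_aeval {ι R A : Type*} [Fintype ι] [DecidableEq ι] [CommRing R] [CommRing A]
    [Algebra R A] (D : Derivation R A A) (f : ι → A) (p : MvPolynomial ι R) :
    D (aeval f p) = ∑ j, aeval f (pderiv j p) * D (f j) := by
  induction p using MvPolynomial.induction_on with
  | C c => simp
  | add p q hp hq => simp [hp, hq, add_mul, Finset.sum_add_distrib]
  | mul_X p j hp =>
    simp only [map_mul, aeval_X, Derivation.leibniz, smul_eq_mul, hp, map_add, pderiv_mul]
    simp only [add_mul]
    rw [Finset.sum_add_distrib]
    congr 1
    · rw [Finset.sum_eq_single j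
        (fun t _ ht => by rw [pderiv_X_of_ne (Ne.symm ht)]; simp) (by simp), pderiv_X_self]
      simp
    · rw [Finset.mul_sum]
      exact Finset.sum_congr rfl fun t _ => by ring

lemma pderiv_totalDegree_le {ι R : Type*} [CommRing R] [DecidableEq ι] (p : MvPolynomial ι R)
    (q : ι) (d : ℕ) (hp : p.totalDegree ≤ d + 1) : (pderiv q p).totalDegree ≤ d := by
  rw [p.as_sum, map_sum]
  refine (totalDegree_finset_sum _ _).trans (Finset.sup_le fun m hm => ?_)
  rw [pderiv_monomial]
  by_cases hq : m q = 0
  · simp [hq]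
  · refine (totalDegree_monomial_le _ _).trans ?_
    have hle : Finsupp.single q 1 ≤ m := by
      rw [Finsupp.single_le_iff]; omega
    have hmsum : ((m - Finsupp.single q 1).sum fun _ e => e) + 1 ≤ d + 1 := by
      have h1 : m = (m - Finsupp.single q 1) + Finsupp.single q 1 :=
        (tsub_add_cancel_of_le hle).symm
      have h2 : (m.sum fun _ e => e) ≤ d + 1 :=
        le_trans (MvPolynomial.le_totalDegree hm) hp
      rw [h1, Finsupp.sum_add_index' (fun _ => rfl) (fun _ _ _ => rfl)] at h2
      simpa using h2
    have hid : ((m - Finsupp.single q 1).sum fun _ => id)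
        = ((m - Finsupp.single q 1).sum fun _ e => e) := rfl
    rw [hid]
    omega

lemma coeff_pderiv' {ι R : Type*} [CommRing R] [DecidableEq ι] (p : MvPolynomial ι R)
    (q : ι) (m : ι →₀ ℕ) (hq : m q ≠ 0) :
    (pderiv q p).coeff (m - Finsupp.single q 1) = p.coeff m * (m q : R) := by
  conv_lhs => rw [p.as_sum]
  rw [map_sum, coeff_sum]
  rw [Finset.sum_eq_single m ?ne ?nm]
  case ne =>
    intro m' hm' hne
    rw [pderiv_monomial, coeff_monomial]
    by_cases h0 : m' q = 0
    · simp [h0]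
    · rw [if_neg]
      intro heq
      apply hne
      ext j
      by_cases hj : j = q
      · subst hj
        have h1 : m' j - 1 = m j - 1 := by
          have := congrArg (fun g : ι →₀ ℕ => g j) heq
          simpa [Finsupp.tsub_apply, Finsupp.single_apply] using this
        omega
      · have := congrArg (fun g : ι →₀ ℕ => g j) heq
        simpa [Finsupp.tsub_apply, Finsupp.single_apply, Ne.symm hj] using this
  case nm =>
    intro hm
    rw [MvPolynomial.notMem_support_iff] at hm
    simp [hm]
  · rw [pderiv_monomial, coeff_monomial, if_pos rfl]

variable {k n}

lemma det_monomial_ne_zero {ι : Type*} [Fintype ι] [DecidableEq ι]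
    (emb : ι → Fin n) (hemb : Function.Injective emb)
    (a : ι → ℤ) (ha : Function.Injective a) :
    (Matrix.of fun p q : ι =>
        (AddMonoidAlgebra.single (Pi.single (emb p) (a q)) (1:k) :
          LaurentRing k n)).det ≠ 0 := by
  classical
  set w : Equiv.Perm ι → (Fin n → ℤ) := fun σ => ∑ i, Pi.single (emb (σ i)) (a i) with hw
  have hwapp : ∀ σ : Equiv.Perm ι, ∀ p : ι, w σ (emb p) = a (σ.symm p) := by
    intro σ p
    rw [hw]
    simp only [Finset.sum_apply]
    rw [Finset.sum_eq_single (σ.symm p)]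
    · rw [Equiv.apply_symm_apply, Pi.single_eq_same]
    · intro i _ hi
      rw [Pi.single_eq_of_ne]
      intro h
      exact hi (by rw [← Equiv.symm_apply_apply σ i, hemb h])
    · simp
  have hwinj : Function.Injective w := by
    intro σ τ h
    have : ∀ p, a (σ.symm p) = a (τ.symm p) := fun p => by
      rw [← hwapp σ p, ← hwapp τ p, h]
    have hsymm : σ.symm = τ.symm := Equiv.ext fun p => ha (this p)
    ext p : 1
    rw [← Equiv.symm_symm σ, ← Equiv.symm_symm τ, hsymm]
  rw [Matrix.det_apply]
  have hterm : ∀ σ : Equiv.Perm ι,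
      (Equiv.Perm.sign σ • ∏ i, (Matrix.of fun p q : ι =>
        (AddMonoidAlgebra.single (Pi.single (emb p) (a q)) (1:k) :
          LaurentRing k n)) (σ i) i)
      = AddMonoidAlgebra.single (w σ) ((Equiv.Perm.sign σ : ℤ) : k) := by
    intro σ
    have hprod : (∏ i, (Matrix.of fun p q : ι =>
        (AddMonoidAlgebra.single (Pi.single (emb p) (a q)) (1:k) :
          LaurentRing k n)) (σ i) i)
        = AddMonoidAlgebra.single (w σ) (1:k) := by
      rw [show (∏ i, (Matrix.of fun p q : ι =>
        (AddMonoidAlgebra.single (Pi.single (emb p) (a q)) (1:k) :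
          LaurentRing k n)) (σ i) i)
        = ∏ i, AddMonoidAlgebra.single (Pi.single (emb (σ i)) (a i)) (1:k) from rfl,
        AddMonoidAlgebra.prod_single]
      simp [hw]
    rw [hprod]
    show _ • AddMonoidAlgebra.single (w σ) (1:k) = AddMonoidAlgebra.single (w σ) _
    rcases Int.units_eq_one_or (Equiv.Perm.sign σ) with h | h <;>
      rw [h] <;> simp [Units.smul_def, AddMonoidAlgebra.smul_single]
  rw [Finset.sum_congr rfl fun σ _ => hterm σ]
  intro hzero
  have h2 : (∑ σ : Equiv.Perm ι, AddMonoidAlgebra.single (w σ) (((Equiv.Perm.sign σ : ℤ)) : k))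
      = (0 : LaurentRing k n) := hzero
  have h3 := congrArg (fun f : LaurentRing k n => f.coeff (w 1)) h2
  simp only [AddMonoidAlgebra.coeff_sum, AddMonoidAlgebra.coeff_single, AddMonoidAlgebra.coeff_zero,
    Finsupp.finset_sum_apply, Finsupp.coe_zero, Pi.zero_apply] at h3
  rw [Finset.sum_eq_single (1 : Equiv.Perm ι)] at h3
  · simp at h3
  · intro σ _ hσ
    rw [Finsupp.single_apply, if_neg (fun h => hσ (hwinj h))]
  · simp

end PowerSumsAux

open MvPolynomial PowerSumsAux in
/-- if `k` has characteristic `0` and `r + s ≤ n`, then the power sums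
`p_1^+, …, p_r^+, p_1^−, …, p_s^−` are algebraically independent over `k` in
`k[x_1^{±1}, …, x_n^{±1}]`. -/
theorem powerSums_algebraicIndependent
    (k : Type*) [Field k] [CharZero k] (n r s : ℕ) (hrs : r + s ≤ n) :
    AlgebraicIndependent k
      (Sum.elim (fun a : Fin r => powerSumL k n ((a : ℕ) + 1))
        (fun b : Fin s => powerSumL k n (-((b : ℕ) + 1)))) := by
  classical
  set f : Fin r ⊕ Fin s → LaurentRing k n :=
    Sum.elim (fun a : Fin r => powerSumL k n ((a : ℕ) + 1))
      (fun b : Fin s => powerSumL k n (-((b : ℕ) + 1))) with hfdef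
  set a : Fin r ⊕ Fin s → ℤ :=
    Sum.elim (fun i : Fin r => ((i : ℕ) : ℤ) + 1) (fun j : Fin s => -(((j : ℕ) : ℤ) + 1))
    with hadef
  have ha_inj : Function.Injective a := by
    rintro (i | i) (j | j) h <;>
      simp only [hadef, Sum.elim_inl, Sum.elim_inr] at h
    · exact congrArg Sum.inl (Fin.ext (by omega))
    · exact absurd h (by omega)
    · exact absurd h (by omega)
    · exact congrArg Sum.inr (Fin.ext (by omega))
  have ha_ne : ∀ q, a q ≠ 0 := by
    rintro (i | i) <;> simp only [hadef, Sum.elim_inl, Sum.elim_inr] <;> omega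
  set emb : Fin r ⊕ Fin s → Fin n := fun j => Fin.castLE hrs (finSumFinEquiv j) with hembdef
  have hemb : Function.Injective emb :=
    (Fin.castLE_injective hrs).comp finSumFinEquiv.injective
  have hfa : ∀ q, f q = powerSumL k n (a q) := by rintro (i | i) <;> rfl
  rw [algebraicIndependent_iff]
  intro P hP
  suffices H : ∀ d (p : MvPolynomial (Fin r ⊕ Fin s) k),
      p.totalDegree ≤ d → aeval f p = 0 → p = 0 from H P.totalDegree P le_rfl hP
  have hCcase : ∀ p : MvPolynomial (Fin r ⊕ Fin s) k,
      (∀ m ∈ p.support, m = 0) → aeval f p = 0 → p = 0 := by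
    intro p hsupp hp
    have hpc : p = MvPolynomial.C (p.coeff 0) := by
      apply MvPolynomial.ext
      intro m
      by_cases h : m = 0
      · simp [h]
      · rw [coeff_C, if_neg (Ne.symm h)]
        by_contra hc
        exact h (hsupp m (MvPolynomial.mem_support_iff.mpr hc))
    rw [hpc] at hp ⊢
    rw [aeval_C] at hp
    rw [(algebraMap k (LaurentRing k n)).injective (hp.trans (map_zero _).symm), map_zero]
  intro d
  induction d with
  | zero =>
    intro p hdeg hp
    refine hCcase p (fun m hm => ?_) hp
    have hsum : (m.sum fun _ e => e) = 0 :=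
      Nat.le_zero.mp ((MvPolynomial.le_totalDegree hm).trans hdeg)
    ext q
    simp only [Finsupp.coe_zero, Pi.zero_apply]
    by_contra hq
    have hqmem : q ∈ m.support := Finsupp.mem_support_iff.mpr hq
    have hb := Finset.single_le_sum (f := fun q => m q) (fun _ _ => Nat.zero_le _) hqmem
    rw [Finsupp.sum] at hsum
    omega
  | succ d ih =>
    intro p hdeg hp
    have hveq : ∀ q, aeval f (pderiv q p) = 0 := by
      have hdet := det_monomial_ne_zero (k := k) emb hemb a ha_inj
      have hmv : (Matrix.of fun pp q : Fin r ⊕ Fin s =>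
          (AddMonoidAlgebra.single (Pi.single (emb pp) (a q)) (1:k) :
            LaurentRing k n)).mulVec
          (fun q => (a q : k) • aeval f (pderiv q p)) = 0 := by
        funext pp
        simp only [Matrix.mulVec, dotProduct, Matrix.of_apply, Pi.zero_apply]
        have h0 : wderiv k n (emb pp) (aeval f p) = 0 := by rw [hp, map_zero]
        rw [derivation_aeval (wderiv k n (emb pp)) f p] at h0
        rw [← h0]
        apply Finset.sum_congr rfl
        intro q _
        rw [hfa q, wderiv_powerSumL, mul_smul_comm, mul_smul_comm, mul_comm]
      have hv0 := Matrix.eq_zero_of_mulVec_eq_zero hdet hmv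
      intro q
      have hq := congrFun hv0 q
      simp only [Pi.zero_apply] at hq
      have hcast : ((a q : ℤ) : k) ≠ 0 := Int.cast_ne_zero.mpr (ha_ne q)
      rw [Algebra.smul_def, mul_eq_zero] at hq
      rcases hq with hq | hq
      · exact absurd ((algebraMap k (LaurentRing k n)).injective
          (hq.trans (map_zero _).symm)) hcast
      · exact hq
    have key : ∀ q, pderiv q p = 0 := fun q =>
      ih (pderiv q p) (pderiv_totalDegree_le p q d hdeg) (hveq q)
    refine hCcase p (fun m hm => ?_) hp
    by_contra hm0
    obtain ⟨q, hq⟩ : ∃ q, m q ≠ 0 := by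
      by_contra h
      push_neg at h
      exact hm0 (Finsupp.ext h)
    have hco := coeff_pderiv' p q m hq
    rw [key q] at hco
    simp only [coeff_zero] at hco
    have hc : p.coeff m ≠ 0 := MvPolynomial.mem_support_iff.mp hm
    have hmq : ((m q : ℕ) : k) ≠ 0 := Nat.cast_ne_zero.mpr hq
    exact hc (by
      rcases mul_eq_zero.mp hco.symm with h | h
      · exact h
      · exact absurd h hmq)
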